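/- Let y, w ∈ W_n. (i) If y and w are connected by a finite sequence of Knuth relations of types I_n and II_n, then rep_J(y) = rep_J(w). (ii) If y and w are connected by a finite sequence of Knuth relations of types I_{n−1}, II_{n−1} and III_{n−1}, then rep_K(y) = rep_K(w). -/

import Mathlib

namespace BnPaper

/-- The generator `t`: swaps `1` and `-1`, fixing all other points. -/
def t : Equiv.Perm ℤ := Equiv.swap 1 (-1)

/-- The generator `s i`: swaps `i ↔ i+1` and `-i ↔ -(i+1)`. -/
def s (i : ℤ) : Equiv.Perm ℤ := Equiv.swap i (i + 1) * Equiv.swap (-i) (-(i + 1))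

/-- The descending product `s_j · s_{j-1} ⋯ s_i` (the identity when `i > j`). -/
def desc (i j : ℕ) : Equiv.Perm ℤ :=
  ((List.range (j + 1 - i)).map (fun k => s ((j : ℤ) - (k : ℤ)))).prod

/-- The ascending product `s_i · s_{i+1} ⋯ s_j` (the identity when `i > j`). -/
def asc (i j : ℕ) : Equiv.Perm ℤ :=
  ((List.range (j + 1 - i)).map (fun k => s ((i : ℤ) + (k : ℤ)))).prod

/-- `t_j = s_{j-1} ⋯ s_1 · t · s_1 ⋯ s_{j-1}`. -/
def tt (j : ℕ) : Equiv.Perm ℤ := desc 1 (j - 1) * t * (desc 1 (j - 1))⁻¹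

/-- The Coxeter generating set `{t, s_1, …, s_{n-1}}` of `W_n`. -/
def gens (n : ℕ) : Set (Equiv.Perm ℤ) :=
  insert t {g | ∃ i : ℕ, 1 ≤ i ∧ i ≤ n - 1 ∧ g = s (i : ℤ)}

/-- The Coxeter length: the least number of generators whose product is `w`. -/
noncomputable def len (n : ℕ) (w : Equiv.Perm ℤ) : ℕ :=
  sInf {k | ∃ l : List (Equiv.Perm ℤ), l.length = k ∧ (∀ g ∈ l, g ∈ gens n) ∧ l.prod = w}

/-- `W_n` realised as the signed permutations of `{-n, …, -1, 1, …, n}`: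
permutations of `ℤ` that are odd (`w(-i) = -w(i)`) and fix everything beyond `n` in
absolute value. -/
def W (n : ℕ) : Set (Equiv.Perm ℤ) :=
  {w | (∀ i : ℤ, w (-i) = -(w i)) ∧ ∀ i : ℤ, (n : ℤ) < |i| → w i = i}

/-- The right descent set `Des(w)`. -/
def Des (n : ℕ) (w : Equiv.Perm ℤ) : Set (Equiv.Perm ℤ) :=
  {g | g ∈ gens n ∧ len n (w * g) < len n w}

/-- The enhanced descent-set invariant
`ρ_m(w) = Des(w) ∪ {t_j : 2 ≤ j ≤ m, ℓ(w t_j) < ℓ(w)}`. -/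
def rho (n m : ℕ) (w : Equiv.Perm ℤ) : Set (Equiv.Perm ℤ) :=
  Des n w ∪ {g | ∃ j : ℕ, 2 ≤ j ∧ j ≤ m ∧ g = tt j ∧ len n (w * tt j) < len n w}

/-- `Área_n`: the negative entries of the row form appear in increasing order and
the positive entries in strictly decreasing order. -/
def Area (n : ℕ) : Set (Equiv.Perm ℤ) :=
  {w | w ∈ W n ∧ ∀ i j : ℤ, 1 ≤ i → i < j → j ≤ (n : ℤ) →
    (w i < 0 → w j < 0 → w i < w j) ∧ (0 < w i → 0 < w j → w j < w i)}

/-- The suffix relation `y ≤_e w`: `w = z · y` with `ℓ(w) = ℓ(z) + ℓ(y)`. -/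
def Suf (n : ℕ) (y w : Equiv.Perm ℤ) : Prop :=
  ∃ z, z ∈ W n ∧ w = z * y ∧ len n w = len n z + len n y

/-- `a_q = (t)(s_1 t)(s_2 s_1 t) ⋯ (s_{q-1} ⋯ s_1 t)`. -/
def aw (q : ℕ) : Equiv.Perm ℤ := ((List.range q).map (fun k => desc 1 k * t)).prod

/-- `b_q = (s_{q+1})(s_{q+2} s_{q+1}) ⋯ (s_{n-1} ⋯ s_{q+1})` (identity for `q ≥ n-1`). -/
def bw (n q : ℕ) : Equiv.Perm ℤ :=
  ((List.range (n - 1 - q)).map (fun k => desc (q + 1) (q + 1 + k))).prod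

/-- `σ_{n,q} = a_q · b_q`. -/
def sig (n q : ℕ) : Equiv.Perm ℤ := aw q * bw n q

/-- `p_{n,q} = (s_{n-q} ⋯ s_1)(s_{n-q+1} ⋯ s_2) ⋯ (s_{n-1} ⋯ s_q)`,
with `p_{n,0} = p_{n,n} = e`. -/
def p (n q : ℕ) : Equiv.Perm ℤ :=
  ((List.range q).map (fun m => desc (1 + m) (n - q + m))).prod

/-- `Π_{n,q} = (s_{n-q-1} ⋯ s_1) · t · p_{n,q}`. -/
def PiElt (n q : ℕ) : Equiv.Perm ℤ := desc 1 (n - q - 1) * t * p n q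

/-- `Υ(w) = {z ∈ Área_n : Des(z) = Des(w)}`. -/
def Ups (n : ℕ) (w : Equiv.Perm ℤ) : Set (Equiv.Perm ℤ) :=
  {z | z ∈ Area n ∧ Des n z = Des n w}

/-- The parabolic subgroup `W_J = ⟨s_1, …, s_{n-1}⟩`. -/
def WJ (n : ℕ) : Set (Equiv.Perm ℤ) :=
  ↑(Subgroup.closure {g | ∃ i : ℕ, 1 ≤ i ∧ i ≤ n - 1 ∧ g = s (i : ℤ)})

/-- The parabolic subgroup `W_K = ⟨t, s_1, …, s_{n-2}⟩`. -/
def WK (n : ℕ) : Set (Equiv.Perm ℤ) :=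
  ↑(Subgroup.closure (insert t {g | ∃ i : ℕ, 1 ≤ i ∧ i ≤ n - 2 ∧ g = s (i : ℤ)}))

/-- Knuth relation of type `I_k` : `w' = w · s_{i+1}` when
`w(i+1) < w(i) < w(i+2)` or `w(i+2) < w(i) < w(i+1)`. -/
def stepI (k : ℕ) (w w' : Equiv.Perm ℤ) : Prop :=
  ∃ i : ℤ, 1 ≤ i ∧ i ≤ (k : ℤ) - 2 ∧
    ((w (i + 1) < w i ∧ w i < w (i + 2)) ∨ (w (i + 2) < w i ∧ w i < w (i + 1))) ∧
    w' = w * s (i + 1)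

/-- Knuth relation of type `II_k` : `w' = w · s_i` when
`w(i+1) < w(i+2) < w(i)` or `w(i) < w(i+2) < w(i+1)`. -/
def stepII (k : ℕ) (w w' : Equiv.Perm ℤ) : Prop :=
  ∃ i : ℤ, 1 ≤ i ∧ i ≤ (k : ℤ) - 2 ∧
    ((w (i + 1) < w (i + 2) ∧ w (i + 2) < w i) ∨ (w i < w (i + 2) ∧ w (i + 2) < w (i + 1))) ∧
    w' = w * s i

/-- Knuth relation of type `III_k` : `w' = w · s_i` when `w(i)` and `w(i+1)` have
opposite signs. -/
def stepIII (k : ℕ) (w w' : Equiv.Perm ℤ) : Prop :=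
  ∃ i : ℤ, 1 ≤ i ∧ i ≤ (k : ℤ) - 1 ∧
    ((w i < 0 ∧ 0 < w (i + 1)) ∨ (w (i + 1) < 0 ∧ 0 < w i)) ∧
    w' = w * s i



/-! ### Auxiliary lemmas -/

lemma s_apply (i : ℤ) (hi : 1 ≤ i) (k : ℤ) :
    s i k = if k = i then i + 1 else if k = i + 1 then i
      else if k = -i then -(i + 1) else if k = -(i + 1) then -i else k := by
  simp only [s, Equiv.Perm.mul_apply]
  split_ifs with h1 h2 h3 h4
  · rw [h1]
    have hin : Equiv.swap (-i) (-(i + 1)) i = i :=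
      Equiv.swap_apply_of_ne_of_ne (by omega) (by omega)
    rw [hin, Equiv.swap_apply_left]
  · rw [h2]
    have hin : Equiv.swap (-i) (-(i + 1)) (i + 1) = i + 1 :=
      Equiv.swap_apply_of_ne_of_ne (by omega) (by omega)
    rw [hin, Equiv.swap_apply_right]
  · rw [h3]
    have hin : Equiv.swap (-i) (-(i + 1)) (-i) = -(i + 1) := Equiv.swap_apply_left _ _
    have hout : Equiv.swap i (i + 1) (-(i + 1)) = -(i + 1) :=
      Equiv.swap_apply_of_ne_of_ne (by omega) (by omega)
    rw [hin, hout]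
  · rw [h4]
    have hin : Equiv.swap (-i) (-(i + 1)) (-(i + 1)) = -i := Equiv.swap_apply_right _ _
    have hout : Equiv.swap i (i + 1) (-i) = -i :=
      Equiv.swap_apply_of_ne_of_ne (by omega) (by omega)
    rw [hin, hout]
  · have hin : Equiv.swap (-i) (-(i + 1)) k = k := Equiv.swap_apply_of_ne_of_ne h3 h4
    rw [hin]
    exact Equiv.swap_apply_of_ne_of_ne h1 h2

lemma t_apply (k : ℤ) : t k = if k = 1 then -1 else if k = -1 then 1 else k := by
  simp only [t]
  split_ifs with h1 h2
  · subst h1; exact Equiv.swap_apply_left _ _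
  · subst h2; exact Equiv.swap_apply_right _ _
  · exact Equiv.swap_apply_of_ne_of_ne h1 h2

lemma s_s (i : ℤ) (hi : 1 ≤ i) (k : ℤ) : s i (s i k) = k := by
  rw [s_apply i hi k]
  split_ifs with h1 h2 h3 h4 <;> rw [s_apply i hi] <;> split_ifs <;> omega

lemma s_mul_s (i : ℤ) (hi : 1 ≤ i) : s i * s i = 1 :=
  Equiv.ext fun k => s_s i hi k

lemma t_one : t 1 = -1 := Equiv.swap_apply_left _ _

lemma t_negone : t (-1) = 1 := Equiv.swap_apply_right _ _

lemma t_t (k : ℤ) : t (t k) = k := by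
  rw [t_apply k]
  split_ifs with h1 h2
  · rw [t_negone]; omega
  · rw [t_one]; omega
  · rw [t_apply]; split_ifs <;> omega

lemma t_mul_t : t * t = 1 := Equiv.ext fun k => t_t k

lemma t_mem_W (n : ℕ) (hn : 1 ≤ n) : t ∈ W n := by
  constructor
  · intro i; rw [t_apply, t_apply]; split_ifs <;> omega
  · intro i hi
    have hn' : (1 : ℤ) ≤ (n : ℤ) := by exact_mod_cast hn
    rcases abs_cases i with ⟨h, h'⟩ | ⟨h, h'⟩ <;> rw [t_apply] <;> split_ifs <;> omega

lemma s_mem_W (n : ℕ) (i : ℤ) (hi : 1 ≤ i) (hin : i ≤ (n : ℤ) - 1) : s i ∈ W n := by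
  constructor
  · intro k; rw [s_apply i hi, s_apply i hi]; split_ifs <;> omega
  · intro k hk
    rcases abs_cases k with ⟨h, h'⟩ | ⟨h, h'⟩ <;> rw [s_apply i hi] <;> split_ifs <;> omega

lemma W_one (n : ℕ) : (1 : Equiv.Perm ℤ) ∈ W n :=
  ⟨fun i => rfl, fun i _ => rfl⟩

lemma W_mul {n : ℕ} {a b : Equiv.Perm ℤ} (ha : a ∈ W n) (hb : b ∈ W n) :
    a * b ∈ W n := by
  constructor
  · intro i
    rw [Equiv.Perm.mul_apply, Equiv.Perm.mul_apply, hb.1, ha.1]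
  · intro i hi
    rw [Equiv.Perm.mul_apply, hb.2 i hi, ha.2 i hi]

lemma W_inv {n : ℕ} {a : Equiv.Perm ℤ} (ha : a ∈ W n) : a⁻¹ ∈ W n := by
  constructor
  · intro i
    have h := ha.1 (a⁻¹ i)
    rw [show a (a⁻¹ i) = i from a.apply_symm_apply i] at h
    calc a⁻¹ (-i) = a⁻¹ (a (-(a⁻¹ i))) := by rw [h]
    _ = -(a⁻¹ i) := a.symm_apply_apply _

  · intro i hi
    rw [Equiv.Perm.inv_eq_iff_eq]
    exact (ha.2 i hi).symm

lemma W_zero {n : ℕ} {a : Equiv.Perm ℤ} (ha : a ∈ W n) : a 0 = 0 := by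
  have h := ha.1 0
  simp only [neg_zero] at h
  omega

lemma W_abs {n : ℕ} {a : Equiv.Perm ℤ} (ha : a ∈ W n) {i : ℤ} (h0 : i ≠ 0)
    (hb : |i| ≤ (n : ℤ)) : a i ≠ 0 ∧ |a i| ≤ (n : ℤ) := by
  constructor
  · intro h
    exact h0 (a.injective (h.trans (W_zero ha).symm))
  · by_contra h
    push_neg at h
    have h2 : a (a i) = a i := ha.2 (a i) h
    have h3 : a i = i := a.injective h2
    rw [h3] at h
    exact absurd hb (not_le.mpr h)

/-! ### The length statistic `F` -/

/-- Index domain for the statistic. -/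
noncomputable def DD (n : ℕ) : Finset (ℤ × ℤ) := Finset.Icc 1 (n : ℤ) ×ˢ Finset.Icc 1 (n : ℤ)

/-- The summand: inversion indicator plus negative-sum indicator. -/
def fterm (w : Equiv.Perm ℤ) (p : ℤ × ℤ) : ℕ :=
  (if p.1 < p.2 ∧ w p.2 < w p.1 then 1 else 0) +
  (if p.1 ≤ p.2 ∧ w p.1 + w p.2 < 0 then 1 else 0)

/-- The B_n length statistic. -/
noncomputable def F (n : ℕ) (w : Equiv.Perm ℤ) : ℕ := ∑ p ∈ DD n, fterm w p

lemma F_one (n : ℕ) : F n 1 = 0 := by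
  apply Finset.sum_eq_zero
  rintro ⟨a, b⟩ hp
  simp only [DD, Finset.mem_product, Finset.mem_Icc] at hp
  simp only [fterm]
  split_ifs with h1 h2 h2 <;> simp only [Equiv.Perm.one_apply] at * <;> omega

lemma s_maps_Icc {n : ℕ} {i : ℤ} (h1 : 1 ≤ i) (h2 : i ≤ (n : ℤ) - 1) {a : ℤ}
    (ha : a ∈ Finset.Icc 1 (n : ℤ)) : s i a ∈ Finset.Icc 1 (n : ℤ) := by
  simp only [Finset.mem_Icc] at ha ⊢
  rw [s_apply i h1]
  split_ifs <;> omega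

lemma s_apply_pos {i : ℤ} (h1 : 1 ≤ i) {a : ℤ} (ha : 1 ≤ a) :
    s i a = if a = i then i + 1 else if a = i + 1 then i else a := by
  rw [s_apply i h1]
  split_ifs <;> omega

/-- Key exchange identity for `F` under right multiplication by `s i`. -/
lemma F_s (n : ℕ) (w : Equiv.Perm ℤ) (i : ℤ) (h1 : 1 ≤ i) (h2 : i ≤ (n : ℤ) - 1) :
    F n (w * s i) + (if w (i + 1) < w i then 1 else 0)
      = F n w + (if w i < w (i + 1) then 1 else 0) := by
  set w' := w * s i with hw'
  have hw'app : ∀ k : ℤ, w' (s i k) = w k := by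
    intro k
    rw [hw', Equiv.Perm.mul_apply, s_s i h1]
  -- reindex F n w' by the bijection p ↦ (s i p.1, s i p.2)
  have hre : F n w' = ∑ p ∈ DD n, fterm w' (s i p.1, s i p.2) := by
    rw [F]
    apply Finset.sum_nbij' (i := fun p => (s i p.1, s i p.2)) (j := fun p => (s i p.1, s i p.2))
    · rintro ⟨a, b⟩ hp
      simp only [DD, Finset.mem_product] at hp ⊢
      exact ⟨s_maps_Icc h1 h2 hp.1, s_maps_Icc h1 h2 hp.2⟩
    · rintro ⟨a, b⟩ hp
      simp only [DD, Finset.mem_product] at hp ⊢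
      exact ⟨s_maps_Icc h1 h2 hp.1, s_maps_Icc h1 h2 hp.2⟩
    · rintro ⟨a, b⟩ _
      simp [s_s i h1]
    · rintro ⟨a, b⟩ _
      simp [s_s i h1]
    · rintro ⟨a, b⟩ _
      simp [s_s i h1]
  have hq1 : ((i, i + 1) : ℤ × ℤ) ∈ DD n := by
    simp only [DD, Finset.mem_product, Finset.mem_Icc]; omega
  have hq2 : ((i + 1, i) : ℤ × ℤ) ∈ (DD n).erase (i, i + 1) := by
    simp only [Finset.mem_erase, DD, Finset.mem_product, Finset.mem_Icc, ne_eq,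
      Prod.mk.injEq]
    omega
  -- pointwise equality away from the two special points
  have hpt : ∀ p ∈ ((DD n).erase (i, i + 1)).erase (i + 1, i),
      fterm w' (s i p.1, s i p.2) = fterm w p := by
    rintro ⟨a, b⟩ hp
    have hp2 := Finset.mem_of_mem_erase hp
    have hne2 : ((a, b) : ℤ × ℤ) ≠ (i + 1, i) := Finset.ne_of_mem_erase hp
    have hne1 : ((a, b) : ℤ × ℤ) ≠ (i, i + 1) := Finset.ne_of_mem_erase hp2
    have hab : (a, b) ∈ DD n := Finset.mem_of_mem_erase hp2
    simp only [DD, Finset.mem_product, Finset.mem_Icc] at hab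
    simp only [ne_eq, Prod.mk.injEq, not_and_or] at hne1 hne2
    simp only [fterm, hw'app]
    have hsa := s_apply_pos h1 (show (1:ℤ) ≤ a by omega)
    have hsb := s_apply_pos h1 (show (1:ℤ) ≤ b by omega)
    have hlt : s i a < s i b ↔ a < b := by
      rw [hsa, hsb]; split_ifs <;> omega
    have hle : s i a ≤ s i b ↔ a ≤ b := by
      rw [hsa, hsb]; split_ifs <;> omega
    congr 1
    · split_ifs with hA hB hB
      · rfl
      · exact absurd ⟨hlt.mp hA.1, hA.2⟩ hB
      · exact absurd ⟨hlt.mpr hB.1, hB.2⟩ hA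
      · rfl
    · split_ifs with hA hB hB
      · rfl
      · exact absurd ⟨hle.mp hA.1, hA.2⟩ hB
      · exact absurd ⟨hle.mpr hB.1, hB.2⟩ hA
      · rfl
  -- split off the two special points from both sums
  have e1 := Finset.sum_erase_add ((DD n).erase (i, i + 1))
    (fun p => fterm w' (s i p.1, s i p.2)) hq2
  have e1' := Finset.sum_erase_add (DD n) (fun p => fterm w' (s i p.1, s i p.2)) hq1
  have e2 := Finset.sum_erase_add ((DD n).erase (i, i + 1)) (fterm w) hq2
  have e2' := Finset.sum_erase_add (DD n) (fterm w) hq1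
  dsimp only at e1 e1' e2 e2'
  have e3 : ∑ p ∈ ((DD n).erase (i, i + 1)).erase (i + 1, i), fterm w' (s i p.1, s i p.2)
      = ∑ p ∈ ((DD n).erase (i, i + 1)).erase (i + 1, i), fterm w p :=
    Finset.sum_congr rfl hpt
  -- now compute the corner terms
  have hsi : s i i = i + 1 := by rw [s_apply_pos h1 h1]; split_ifs <;> omega
  have hsi1 : s i (i + 1) = i := by
    rw [s_apply_pos h1 (by omega)]; split_ifs <;> omega
  rw [hsi, hsi1] at e1 e1'
  have hv1 := hw'app i
  rw [hsi] at hv1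
  have hv2 := hw'app (i + 1)
  rw [hsi1] at hv2
  have c1 : fterm w' (i, i + 1)
      = (if w i < w (i + 1) then 1 else 0) + (if w i + w (i + 1) < 0 then 1 else 0) := by
    simp only [fterm, hv1, hv2]
    split_ifs <;> omega
  have c2 : fterm w' (i + 1, i) = 0 := by
    simp only [fterm, hv1, hv2]
    split_ifs <;> omega
  have c3 : fterm w (i, i + 1)
      = (if w (i + 1) < w i then 1 else 0) + (if w i + w (i + 1) < 0 then 1 else 0) := by
    simp only [fterm]
    split_ifs <;> omega
  have c4 : fterm w (i + 1, i) = 0 := by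
    simp only [fterm]
    split_ifs <;> omega
  have hFw : F n w = ∑ p ∈ DD n, fterm w p := rfl
  rw [hre, hFw]
  omega

/-- Key exchange identity for `F` under right multiplication by `t`. -/
lemma F_t (n : ℕ) (hn : 1 ≤ n) (w : Equiv.Perm ℤ) (hodd : w (-1) = -(w 1)) :
    F n (w * t) + (if w 1 < 0 then 1 else 0) = F n w + (if 0 < w 1 then 1 else 0) := by
  set w' := w * t with hw'
  have hv1 : w' 1 = -(w 1) := by rw [hw', Equiv.Perm.mul_apply, t_one, hodd]
  have hvk : ∀ k : ℤ, k ≠ 1 → k ≠ -1 → w' k = w k := by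
    intro k hk1 hk2
    rw [hw', Equiv.Perm.mul_apply, t_apply]
    split_ifs <;> tauto
  have hq1 : ((1, 1) : ℤ × ℤ) ∈ DD n := by
    simp only [DD, Finset.mem_product, Finset.mem_Icc]
    have : (1 : ℤ) ≤ (n : ℤ) := by exact_mod_cast hn
    omega
  have hpt : ∀ p ∈ (DD n).erase (1, 1), fterm w' p = fterm w p := by
    rintro ⟨a, b⟩ hp
    have hne : ((a, b) : ℤ × ℤ) ≠ (1, 1) := Finset.ne_of_mem_erase hp
    have hab : (a, b) ∈ DD n := Finset.mem_of_mem_erase hp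
    simp only [DD, Finset.mem_product, Finset.mem_Icc] at hab
    simp only [ne_eq, Prod.mk.injEq, not_and_or] at hne
    simp only [fterm]
    rcases eq_or_ne a 1 with ha1 | ha1
    · rcases eq_or_ne b 1 with hb1 | hb1
      · exact absurd (show a = 1 ∧ b = 1 from ⟨ha1, hb1⟩) (by tauto)
      · subst ha1
        rw [hv1, hvk b hb1 (by omega)]
        split_ifs <;> omega
    · rcases eq_or_ne b 1 with hb1 | hb1
      · subst hb1
        rw [hv1, hvk a ha1 (by omega)]
        split_ifs <;> omega
      · rw [hvk a ha1 (by omega), hvk b hb1 (by omega)]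
  have e1 := Finset.sum_erase_add (DD n) (fterm w') hq1
  have e2 := Finset.sum_erase_add (DD n) (fterm w) hq1
  have e3 : ∑ p ∈ (DD n).erase (1, 1), fterm w' p = ∑ p ∈ (DD n).erase (1, 1), fterm w p :=
    Finset.sum_congr rfl hpt
  have c1 : fterm w' (1, 1) = if 0 < w 1 then 1 else 0 := by
    simp only [fterm, hv1]
    split_ifs <;> omega
  have c2 : fterm w (1, 1) = if w 1 < 0 then 1 else 0 := by
    simp only [fterm]
    split_ifs <;> omega
  have hF1 : F n w' = ∑ p ∈ DD n, fterm w' p := rfl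
  have hF2 : F n w = ∑ p ∈ DD n, fterm w p := rfl
  rw [hF1, hF2]
  omega

lemma gens_mem_W {n : ℕ} (hn : 1 ≤ n) {g : Equiv.Perm ℤ} (hg : g ∈ gens n) : g ∈ W n := by
  rcases hg with hg | ⟨i, hi1, hi2, rfl⟩
  · rw [hg]; exact t_mem_W n hn
  · exact s_mem_W n i (by exact_mod_cast hi1) (by push_cast; omega)

lemma gens_sq {n : ℕ} {g : Equiv.Perm ℤ} (hg : g ∈ gens n) : g * g = 1 := by
  rcases hg with hg | ⟨i, hi1, _, rfl⟩
  · rw [hg]; exact t_mul_t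
  · exact s_mul_s (i : ℤ) (by exact_mod_cast hi1)

lemma prod_mem_W {n : ℕ} (hn : 1 ≤ n) (l : List (Equiv.Perm ℤ))
    (hl : ∀ g ∈ l, g ∈ gens n) : l.prod ∈ W n := by
  induction l with
  | nil => exact W_one n
  | cons a l ih =>
    rw [List.prod_cons]
    exact W_mul (gens_mem_W hn (hl a (by simp)))
      (ih fun g hg => hl g (List.mem_cons_of_mem _ hg))

lemma F_mul_gen_le {n : ℕ} (hn : 1 ≤ n) {w : Equiv.Perm ℤ} (hw : w ∈ W n)
    {g : Equiv.Perm ℤ} (hg : g ∈ gens n) : F n (w * g) ≤ F n w + 1 := by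
  rcases hg with hg | ⟨i, hi1, hi2, rfl⟩
  · rw [hg]
    have := F_t n hn w (hw.1 1)
    split_ifs at this <;> omega
  · have h1 : (1 : ℤ) ≤ (i : ℤ) := by exact_mod_cast hi1
    have h2 : (i : ℤ) ≤ (n : ℤ) - 1 := by push_cast; omega
    have := F_s n w i h1 h2
    split_ifs at this <;> omega

lemma F_le_length {n : ℕ} (hn : 1 ≤ n) (l : List (Equiv.Perm ℤ))
    (hl : ∀ g ∈ l, g ∈ gens n) : F n l.prod ≤ l.length := by
  induction l using List.reverseRecOn with
  | nil =>
    simp only [List.prod_nil, List.length_nil, F_one, le_refl]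
  | append_singleton l g ih =>
    have hl' : ∀ g' ∈ l, g' ∈ gens n := fun g' hg' => hl g' (by simp [hg'])
    have hg : g ∈ gens n := hl g (by simp)
    rw [List.prod_append, List.prod_cons, List.prod_nil, mul_one]
    have := F_mul_gen_le hn (prod_mem_W hn l hl') hg
    have := ih hl'
    simp only [List.length_append, List.length_cons, List.length_nil]
    omega

/-- Every element of `W n` other than the identity admits a length-reducing generator. -/
lemma exists_descent {n : ℕ} (hn : 1 ≤ n) {w : Equiv.Perm ℤ} (hw : w ∈ W n)
    (hne : w ≠ 1) : ∃ g ∈ gens n, F n (w * g) + 1 = F n w := by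
  by_cases hdes : ∃ i : ℤ, 1 ≤ i ∧ i ≤ (n : ℤ) - 1 ∧ w (i + 1) < w i
  · obtain ⟨i, h1, h2, h3⟩ := hdes
    refine ⟨s i, Or.inr ⟨i.toNat, ?_, ?_, by rw [Int.toNat_of_nonneg (by omega)]⟩, ?_⟩
    · omega
    · omega
    · have := F_s n w i h1 h2
      have hne2 : ¬ (w i < w (i + 1)) := by omega
      split_ifs at this <;> omega
  · push_neg at hdes
    by_cases hneg : w 1 < 0
    · refine ⟨t, Or.inl rfl, ?_⟩
      have := F_t n hn w (hw.1 1)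
      split_ifs at this <;> omega
    · exfalso
      apply hne
      -- w is the identity
      have hmono : ∀ i : ℤ, 1 ≤ i → i ≤ (n : ℤ) - 1 → w i < w (i + 1) := by
        intro i h1 h2
        have hle := hdes i h1 h2
        have : w i ≠ w (i + 1) := fun h => by
          have := w.injective h; omega
        omega
      have hone : 0 < w 1 := by
        have h0 : w 1 ≠ 0 := by
          intro h
          have := w.injective (h.trans (W_zero hw).symm)
          omega
        omega
      -- lower bounds by induction
      have hlow : ∀ k : ℕ, ∀ i : ℤ, 1 ≤ i → i ≤ (n : ℤ) → i ≤ 1 + (k : ℤ) → i ≤ w i := by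
        intro k
        induction k with
        | zero =>
          intro i h1 h2 h3
          have : i = 1 := by omega
          subst this
          omega
        | succ m ih =>
          intro i h1 h2 h3
          by_cases hc : i ≤ 1 + (m : ℤ)
          · exact ih i h1 h2 hc
          · have hi2 : 2 ≤ i := by omega
            have := ih (i - 1) (by omega) (by omega) (by push_cast; omega)
            have := hmono (i - 1) (by omega) (by omega)
            have heq : i - 1 + 1 = i := by omega
            rw [heq] at this
            omega
      have hup : ∀ k : ℕ, ∀ i : ℤ, 1 ≤ i → i ≤ (n : ℤ) → (n : ℤ) - (k : ℤ) ≤ i → w i ≤ i := by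
        intro k
        induction k with
        | zero =>
          intro i h1 h2 h3
          have : i = (n : ℤ) := by omega
          subst this
          have := (W_abs hw (show (n : ℤ) ≠ 0 by omega) (by rw [abs_of_pos (by omega)])).2
          rcases abs_cases (w (n : ℤ)) with ⟨h, _⟩ | ⟨h, _⟩ <;> omega
        | succ m ih =>
          intro i h1 h2 h3
          by_cases hc : (n : ℤ) - (m : ℤ) ≤ i
          · exact ih i h1 h2 hc
          · have := ih (i + 1) (by omega) (by push_cast at h3 ⊢; omega) (by push_cast at h3 ⊢; omega)
            have := hmono i h1 (by push_cast at h3 ⊢; omega)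
            omega
      have hfix : ∀ i : ℤ, 1 ≤ i → i ≤ (n : ℤ) → w i = i := by
        intro i h1 h2
        have e1 := hlow (i - 1).toNat i h1 h2 (by rw [Int.toNat_of_nonneg (by omega)]; omega)
        have e2 := hup ((n : ℤ) - i).toNat i h1 h2
          (by rw [Int.toNat_of_nonneg (by omega)]; omega)
        omega
      apply Equiv.ext
      intro z
      simp only [Equiv.Perm.one_apply]
      by_cases hz : (n : ℤ) < |z|
      · exact hw.2 z hz
      · push_neg at hz
        rcases lt_trichotomy z 0 with hz0 | hz0 | hz0
        · have hz' : 1 ≤ -z ∧ -z ≤ (n : ℤ) := by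
            rcases abs_cases z with ⟨h, _⟩ | ⟨h, _⟩ <;> omega
          have := hfix (-z) hz'.1 hz'.2
          have hodd := hw.1 (-z)
          rw [neg_neg] at hodd
          omega
        · subst hz0; exact W_zero hw
        · have hz' : z ≤ (n : ℤ) := by
            rcases abs_cases z with ⟨h, _⟩ | ⟨h, _⟩ <;> omega
          exact hfix z (by omega) hz'

lemma exists_word {n : ℕ} (hn : 1 ≤ n) :
    ∀ k : ℕ, ∀ w : Equiv.Perm ℤ, w ∈ W n → F n w = k →
      ∃ l : List (Equiv.Perm ℤ), l.length = k ∧ (∀ g ∈ l, g ∈ gens n) ∧ l.prod = w := by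
  intro k
  induction k with
  | zero =>
    intro w hw hF
    have : w = 1 := by
      by_contra hne
      obtain ⟨g, _, hg2⟩ := exists_descent hn hw hne
      omega
    exact ⟨[], rfl, by simp, by simp [this]⟩
  | succ m ih =>
    intro w hw hF
    have hne : w ≠ 1 := by
      intro h
      rw [h, F_one] at hF
      omega
    obtain ⟨g, hg, hg2⟩ := exists_descent hn hw hne
    obtain ⟨l, hl1, hl2, hl3⟩ := ih (w * g) (W_mul hw (gens_mem_W hn hg)) (by omega)
    refine ⟨l ++ [g], by simp [hl1], ?_, ?_⟩
    · intro g' hg'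
      rcases List.mem_append.mp hg' with h | h
      · exact hl2 g' h
      · simp only [List.mem_singleton] at h
        rw [h]; exact hg
    · rw [List.prod_append, List.prod_cons, List.prod_nil, mul_one, hl3,
        mul_assoc, gens_sq hg, mul_one]

/-- On `W n`, the word length equals the statistic `F`. -/
lemma len_eq_F {n : ℕ} (hn : 1 ≤ n) {w : Equiv.Perm ℤ} (hw : w ∈ W n) :
    len n w = F n w := by
  obtain ⟨l, hl1, hl2, hl3⟩ := exists_word hn (F n w) w hw rfl
  have hmem : F n w ∈ {k | ∃ l : List (Equiv.Perm ℤ),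
      l.length = k ∧ (∀ g ∈ l, g ∈ gens n) ∧ l.prod = w} := ⟨l, hl1, hl2, hl3⟩
  have hle : len n w ≤ F n w := Nat.sInf_le hmem
  have hne : {k | ∃ l : List (Equiv.Perm ℤ),
      l.length = k ∧ (∀ g ∈ l, g ∈ gens n) ∧ l.prod = w}.Nonempty := ⟨F n w, hmem⟩
  obtain ⟨l', hl1', hl2', hl3'⟩ := Nat.sInf_mem hne
  have hF := F_le_length hn l' hl2'
  rw [hl3', hl1'] at hF
  have hlen : len n w = sInf {k | ∃ l : List (Equiv.Perm ℤ),
      l.length = k ∧ (∀ g ∈ l, g ∈ gens n) ∧ l.prod = w} := rfl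
  omega

/-! ### Parabolic subgroups -/

/-- The subgroup of `W n` consisting of elements positive on `{1, …, n}`. -/
def posSubgroup (n : ℕ) : Subgroup (Equiv.Perm ℤ) where
  carrier := {v | v ∈ W n ∧ ∀ i : ℤ, 1 ≤ i → i ≤ (n : ℤ) → 1 ≤ v i}
  one_mem' := ⟨W_one n, fun i hi _ => by simpa using hi⟩
  mul_mem' := by
    rintro a b ⟨haW, ha⟩ ⟨hbW, hb⟩
    refine ⟨W_mul haW hbW, fun i hi1 hi2 => ?_⟩
    rw [Equiv.Perm.mul_apply]
    have h1 := hb i hi1 hi2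
    have h2 := (W_abs hbW (i := i) (by omega) (by rw [abs_of_pos (by omega)]; omega)).2
    rcases abs_cases (b i) with ⟨h, _⟩ | ⟨h, _⟩
    · exact ha (b i) h1 (by omega)
    · omega
  inv_mem' := by
    rintro a ⟨haW, ha⟩
    refine ⟨W_inv haW, fun i hi1 hi2 => ?_⟩
    set j := a⁻¹ i with hj
    have hji : a j = i := a.apply_symm_apply i
    have hj0 : j ≠ 0 := by
      intro h
      rw [h, W_zero haW] at hji
      omega
    have hjb : |j| ≤ (n : ℤ) :=
      (W_abs (W_inv haW) (by omega) (by rw [abs_of_pos (by omega)]; omega)).2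
    by_contra hneg
    push_neg at hneg
    have hjneg : j < 0 := by omega
    have h1 : 1 ≤ -j ∧ -j ≤ (n : ℤ) := by
      rcases abs_cases j with ⟨h, _⟩ | ⟨h, _⟩ <;> omega
    have h2 := ha (-j) h1.1 h1.2
    have h3 : a (-(-j)) = -(a (-j)) := haW.1 (-j)
    rw [neg_neg] at h3
    rw [h3] at hji
    omega

/-- The subgroup of `W n` consisting of elements fixing `n`. -/
def fixSubgroup (n : ℕ) : Subgroup (Equiv.Perm ℤ) where
  carrier := {v | v ∈ W n ∧ v (n : ℤ) = (n : ℤ)}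
  one_mem' := ⟨W_one n, rfl⟩
  mul_mem' := by
    rintro a b ⟨haW, ha⟩ ⟨hbW, hb⟩
    exact ⟨W_mul haW hbW, by rw [Equiv.Perm.mul_apply, hb, ha]⟩
  inv_mem' := by
    rintro a ⟨haW, ha⟩
    refine ⟨W_inv haW, ?_⟩
    rw [Equiv.Perm.inv_eq_iff_eq, ha]

lemma WJ_le_pos {n : ℕ} (hn : 1 ≤ n) :
    Subgroup.closure {g | ∃ i : ℕ, 1 ≤ i ∧ i ≤ n - 1 ∧ g = s (i : ℤ)} ≤ posSubgroup n := by
  rw [Subgroup.closure_le]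
  rintro g ⟨i, hi1, hi2, rfl⟩
  have h1 : (1 : ℤ) ≤ (i : ℤ) := by exact_mod_cast hi1
  have h2 : (i : ℤ) ≤ (n : ℤ) - 1 := by push_cast; omega
  refine ⟨s_mem_W n i h1 h2, fun k hk1 hk2 => ?_⟩
  rw [s_apply_pos h1 hk1]
  split_ifs <;> omega

lemma WK_le_fix {n : ℕ} (hn : 2 ≤ n) :
    Subgroup.closure (insert t {g | ∃ i : ℕ, 1 ≤ i ∧ i ≤ n - 2 ∧ g = s (i : ℤ)})
      ≤ fixSubgroup n := by
  rw [Subgroup.closure_le]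
  rintro g (rfl | ⟨i, hi1, hi2, rfl⟩)
  · refine ⟨t_mem_W n (by omega), ?_⟩
    rw [t_apply]
    have h2 : (2 : ℤ) ≤ (n : ℤ) := by exact_mod_cast hn
    have hne1 : (n : ℤ) ≠ 1 := by omega
    split_ifs with a b
    · exact absurd a hne1
    · exact b.elim
    · rfl
  · have h1 : (1 : ℤ) ≤ (i : ℤ) := by exact_mod_cast hi1
    have h2 : (i : ℤ) ≤ (n : ℤ) - 2 := by push_cast; omega
    refine ⟨s_mem_W n i h1 (by omega), ?_⟩
    rw [s_apply_pos h1 (by omega : (1:ℤ) ≤ (n:ℤ))]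
    split_ifs <;> omega

/-! ### Rigidity of increasing elements -/

lemma strictMonoOn_of_adj {N : ℤ} {v : Equiv.Perm ℤ}
    (h : ∀ i : ℤ, 1 ≤ i → i ≤ N - 1 → v i < v (i + 1)) :
    ∀ a b : ℤ, 1 ≤ a → b ≤ N → a < b → v a < v b := by
  have key : ∀ k : ℕ, ∀ a b : ℤ, 1 ≤ a → b ≤ N → a < b → b - a ≤ 1 + (k : ℤ) → v a < v b := by
    intro k
    induction k with
    | zero =>
      intro a b ha hb hab hk
      have : b = a + 1 := by omega
      subst this
      exact h a ha (by omega)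
    | succ m ih =>
      intro a b ha hb hab hk
      by_cases hc : b - a ≤ 1 + (m : ℤ)
      · exact ih a b ha hb hab hc
      · have h1 : v a < v (b - 1) := ih a (b - 1) ha (by omega) (by push_cast at hk ⊢; omega)
          (by push_cast at hk ⊢; omega)
        have h2 : v (b - 1) < v (b - 1 + 1) := h (b - 1) (by omega) (by omega)
        have : b - 1 + 1 = b := by omega
        rw [this] at h2
        omega
  intro a b ha hb hab
  exact key (b - a).toNat a b ha hb hab (by rw [Int.toNat_of_nonneg (by omega)]; omega)

lemma mono_id {N : ℤ} (hN : 1 ≤ N) {v : Equiv.Perm ℤ}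
    (hlow : ∀ i : ℤ, 1 ≤ i → i ≤ N → 1 ≤ v i)
    (hup : ∀ i : ℤ, 1 ≤ i → i ≤ N → v i ≤ N)
    (hmono : ∀ i : ℤ, 1 ≤ i → i ≤ N - 1 → v i < v (i + 1)) :
    ∀ i : ℤ, 1 ≤ i → i ≤ N → v i = i := by
  have key1 : ∀ k : ℕ, ∀ i : ℤ, 1 ≤ i → i ≤ N → i ≤ 1 + (k : ℤ) → i ≤ v i := by
    intro k
    induction k with
    | zero =>
      intro i h1 h2 h3
      have : i = 1 := by omega
      subst this
      exact hlow 1 le_rfl hN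
    | succ m ih =>
      intro i h1 h2 h3
      by_cases hc : i ≤ 1 + (m : ℤ)
      · exact ih i h1 h2 hc
      · have e1 := ih (i - 1) (by omega) (by omega) (by push_cast at h3 ⊢; omega)
        have e2 := hmono (i - 1) (by omega) (by omega)
        have : i - 1 + 1 = i := by omega
        rw [this] at e2
        omega
  have key2 : ∀ k : ℕ, ∀ i : ℤ, 1 ≤ i → i ≤ N → N - (k : ℤ) ≤ i → v i ≤ i := by
    intro k
    induction k with
    | zero =>
      intro i h1 h2 h3
      have e := hup i h1 h2
      omega
    | succ m ih =>
      intro i h1 h2 h3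
      by_cases hc : N - (m : ℤ) ≤ i
      · exact ih i h1 h2 hc
      · have e1 := ih (i + 1) (by omega) (by push_cast at h3 ⊢; omega)
          (by push_cast at h3 ⊢; omega)
        have e2 := hmono i h1 (by push_cast at h3 ⊢; omega)
        omega
  intro i h1 h2
  have e1 := key1 (i - 1).toNat i h1 h2 (by rw [Int.toNat_of_nonneg (by omega)]; omega)
  have e2 := key2 (N - i).toNat i h1 h2 (by rw [Int.toNat_of_nonneg (by omega)]; omega)
  omega

lemma eq_one_of_fix {n : ℕ} {v : Equiv.Perm ℤ} (hv : v ∈ W n)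
    (h : ∀ i : ℤ, 1 ≤ i → i ≤ (n : ℤ) → v i = i) : v = 1 := by
  apply Equiv.ext
  intro z
  simp only [Equiv.Perm.one_apply]
  by_cases hz : (n : ℤ) < |z|
  · exact hv.2 z hz
  · push_neg at hz
    rcases lt_trichotomy z 0 with hz0 | hz0 | hz0
    · have hz' : 1 ≤ -z ∧ -z ≤ (n : ℤ) := by
        rcases abs_cases z with ⟨hh, _⟩ | ⟨hh, _⟩ <;> omega
      have e1 := h (-z) hz'.1 hz'.2
      have e2 := hv.1 (-z)
      rw [neg_neg] at e2
      omega
    · subst hz0; exact W_zero hv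
    · have hz' : z ≤ (n : ℤ) := by
        rcases abs_cases z with ⟨hh, _⟩ | ⟨hh, _⟩ <;> omega
      exact h z (by omega) hz'

/-! ### Knuth moves stay in the coset -/

lemma s_mem_SJ {n : ℕ} (hn : 2 ≤ n) {i : ℤ} (h1 : 1 ≤ i) (h2 : i ≤ (n : ℤ) - 1) :
    s i ∈ {g | ∃ m : ℕ, 1 ≤ m ∧ m ≤ n - 1 ∧ g = s (m : ℤ)} :=
  ⟨i.toNat, by omega, by omega, by rw [show ((i.toNat : ℕ) : ℤ) = i by omega]⟩

lemma s_mem_SK {n : ℕ} (hn : 2 ≤ n) {i : ℤ} (h1 : 1 ≤ i) (h2 : i ≤ (n : ℤ) - 2) :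
    s i ∈ insert t {g | ∃ m : ℕ, 1 ≤ m ∧ m ≤ n - 2 ∧ g = s (m : ℤ)} :=
  Set.mem_insert_iff.mpr (Or.inr
    ⟨i.toNat, by omega, by omega, by rw [show ((i.toNat : ℕ) : ℤ) = i by omega]⟩)

lemma rtgJ {n : ℕ} (hn : 2 ≤ n) {y w : Equiv.Perm ℤ}
    (h : Relation.ReflTransGen (fun a b => stepI n a b ∨ stepII n a b) y w) :
    y⁻¹ * w ∈ Subgroup.closure {g | ∃ m : ℕ, 1 ≤ m ∧ m ≤ n - 1 ∧ g = s (m : ℤ)} := by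
  induction h with
  | refl => rw [inv_mul_cancel]; exact Subgroup.one_mem _
  | tail h1 h2 ih =>
    rcases h2 with ⟨i, hi1, hi2, _, rfl⟩ | ⟨i, hi1, hi2, _, rfl⟩
    · rw [← mul_assoc]
      exact mul_mem ih (Subgroup.subset_closure (s_mem_SJ hn (by omega) (by omega)))
    · rw [← mul_assoc]
      exact mul_mem ih (Subgroup.subset_closure (s_mem_SJ hn hi1 (by omega)))

lemma rtgK {n : ℕ} (hn : 2 ≤ n) {y w : Equiv.Perm ℤ}
    (h : Relation.ReflTransGen
      (fun a b => stepI (n - 1) a b ∨ stepII (n - 1) a b ∨ stepIII (n - 1) a b) y w) :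
    y⁻¹ * w ∈ Subgroup.closure
      (insert t {g | ∃ m : ℕ, 1 ≤ m ∧ m ≤ n - 2 ∧ g = s (m : ℤ)}) := by
  have hc : ((n - 1 : ℕ) : ℤ) = (n : ℤ) - 1 := by omega
  induction h with
  | refl => rw [inv_mul_cancel]; exact Subgroup.one_mem _
  | tail h1 h2 ih =>
    rcases h2 with ⟨i, hi1, hi2, _, rfl⟩ | ⟨i, hi1, hi2, _, rfl⟩ | ⟨i, hi1, hi2, _, rfl⟩
    · rw [hc] at hi2
      rw [← mul_assoc]
      exact mul_mem ih (Subgroup.subset_closure (s_mem_SK hn (by omega) (by omega)))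
    · rw [hc] at hi2
      rw [← mul_assoc]
      exact mul_mem ih (Subgroup.subset_closure (s_mem_SK hn hi1 (by omega)))
    · rw [hc] at hi2
      rw [← mul_assoc]
      exact mul_mem ih (Subgroup.subset_closure (s_mem_SK hn hi1 (by omega)))

/-! ### Minimal representatives are increasing -/

lemma min_rep_J {n : ℕ} (hn : 2 ≤ n) {yy x u : Equiv.Perm ℤ} (hy : yy ∈ W n)
    (hu : u ∈ Subgroup.closure {g | ∃ m : ℕ, 1 ≤ m ∧ m ≤ n - 1 ∧ g = s (m : ℤ)})
    (hyx : yy = x * u)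
    (hmin : ∀ v ∈ Subgroup.closure {g | ∃ m : ℕ, 1 ≤ m ∧ m ≤ n - 1 ∧ g = s (m : ℤ)},
      len n x ≤ len n (yy * v)) :
    x ∈ W n ∧ ∀ i : ℤ, 1 ≤ i → i ≤ (n : ℤ) - 1 → x i < x (i + 1) := by
  have hn1 : 1 ≤ n := by omega
  have huW : u ∈ W n := (WJ_le_pos hn1 hu).1
  have hxW : x ∈ W n := by
    have : x = yy * u⁻¹ := by rw [hyx]; group
    rw [this]
    exact W_mul hy (W_inv huW)
  refine ⟨hxW, fun i h1 h2 => ?_⟩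
  by_contra hlt
  push_neg at hlt
  have hne : x i ≠ x (i + 1) := fun h => by have := x.injective h; omega
  have hgt : x (i + 1) < x i := by omega
  have hgW : s i ∈ W n := s_mem_W n i h1 h2
  have hxgW : x * s i ∈ W n := W_mul hxW hgW
  have hdrop := F_s n x i h1 h2
  rw [if_pos hgt, if_neg (show ¬ x i < x (i + 1) by omega)] at hdrop
  have hv : u⁻¹ * s i ∈ Subgroup.closure {g | ∃ m : ℕ, 1 ≤ m ∧ m ≤ n - 1 ∧ g = s (m : ℤ)} :=
    mul_mem (inv_mem hu) (Subgroup.subset_closure (s_mem_SJ hn h1 h2))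
  have hle := hmin _ hv
  have heq : yy * (u⁻¹ * s i) = x * s i := by rw [hyx]; group
  rw [heq, len_eq_F hn1 hxW, len_eq_F hn1 hxgW] at hle
  omega

lemma min_rep_K {n : ℕ} (hn : 2 ≤ n) {yy x u : Equiv.Perm ℤ} (hy : yy ∈ W n)
    (hu : u ∈ Subgroup.closure (insert t {g | ∃ m : ℕ, 1 ≤ m ∧ m ≤ n - 2 ∧ g = s (m : ℤ)}))
    (hyx : yy = x * u)
    (hmin : ∀ v ∈ Subgroup.closure (insert t {g | ∃ m : ℕ, 1 ≤ m ∧ m ≤ n - 2 ∧ g = s (m : ℤ)}),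
      len n x ≤ len n (yy * v)) :
    x ∈ W n ∧ (∀ i : ℤ, 1 ≤ i → i ≤ (n : ℤ) - 2 → x i < x (i + 1)) ∧ 0 < x 1 := by
  have hn1 : 1 ≤ n := by omega
  have huW : u ∈ W n := (WK_le_fix hn hu).1
  have hxW : x ∈ W n := by
    have : x = yy * u⁻¹ := by rw [hyx]; group
    rw [this]
    exact W_mul hy (W_inv huW)
  refine ⟨hxW, fun i h1 h2 => ?_, ?_⟩
  · by_contra hlt
    push_neg at hlt
    have hne : x i ≠ x (i + 1) := fun h => by have := x.injective h; omega
    have hgt : x (i + 1) < x i := by omega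
    have hgW : s i ∈ W n := s_mem_W n i h1 (by omega)
    have hxgW : x * s i ∈ W n := W_mul hxW hgW
    have hdrop := F_s n x i h1 (by omega)
    rw [if_pos hgt, if_neg (show ¬ x i < x (i + 1) by omega)] at hdrop
    have hv : u⁻¹ * s i ∈ Subgroup.closure
        (insert t {g | ∃ m : ℕ, 1 ≤ m ∧ m ≤ n - 2 ∧ g = s (m : ℤ)}) :=
      mul_mem (inv_mem hu) (Subgroup.subset_closure (s_mem_SK hn h1 h2))
    have hle := hmin _ hv
    have heq : yy * (u⁻¹ * s i) = x * s i := by rw [hyx]; group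
    rw [heq, len_eq_F hn1 hxW, len_eq_F hn1 hxgW] at hle
    omega
  · have h0 : x 1 ≠ 0 := by
      intro h
      have := x.injective (h.trans (W_zero hxW).symm)
      omega
    by_contra hneg
    push_neg at hneg
    have hneg' : x 1 < 0 := by omega
    have hgW : t ∈ W n := t_mem_W n hn1
    have hxgW : x * t ∈ W n := W_mul hxW hgW
    have hdrop := F_t n hn1 x (hxW.1 1)
    rw [if_pos hneg', if_neg (by omega)] at hdrop
    have hv : u⁻¹ * t ∈ Subgroup.closure
        (insert t {g | ∃ m : ℕ, 1 ≤ m ∧ m ≤ n - 2 ∧ g = s (m : ℤ)}) :=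
      mul_mem (inv_mem hu) (Subgroup.subset_closure (Set.mem_insert _ _))
    have hle := hmin _ hv
    have heq : yy * (u⁻¹ * t) = x * t := by rw [hyx]; group
    rw [heq, len_eq_F hn1 hxW, len_eq_F hn1 hxgW] at hle
    omega

theorem statement18 (n : ℕ) (hn : 2 ≤ n) (y w : Equiv.Perm ℤ)
    (hy : y ∈ W n) (hw : w ∈ W n) :
    (Relation.ReflTransGen (fun a b => stepI n a b ∨ stepII n a b) y w →
      ∀ x u x' u' : Equiv.Perm ℤ,
        u ∈ WJ n → y = x * u → len n y = len n x + len n u →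
        (∀ v ∈ WJ n, len n x ≤ len n (y * v)) →
        u' ∈ WJ n → w = x' * u' → len n w = len n x' + len n u' →
        (∀ v ∈ WJ n, len n x' ≤ len n (w * v)) →
        x = x')
  ∧ (Relation.ReflTransGen
        (fun a b => stepI (n - 1) a b ∨ stepII (n - 1) a b ∨ stepIII (n - 1) a b) y w →
      ∀ x u x' u' : Equiv.Perm ℤ,
        u ∈ WK n → y = x * u → len n y = len n x + len n u →
        (∀ v ∈ WK n, len n x ≤ len n (y * v)) →
        u' ∈ WK n → w = x' * u' → len n w = len n x' + len n u' →
        (∀ v ∈ WK n, len n x' ≤ len n (w * v)) →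
        x = x') := by
  have hn1 : 1 ≤ n := by omega
  constructor
  · -- Part (i): relations of types I_n and II_n
    intro hrel x u x' u' hu hyx hleny hmin hu' hwx' hlenw hmin'
    have hu2 : u ∈ Subgroup.closure {g | ∃ m : ℕ, 1 ≤ m ∧ m ≤ n - 1 ∧ g = s (m : ℤ)} := hu
    have hu'2 : u' ∈ Subgroup.closure {g | ∃ m : ℕ, 1 ≤ m ∧ m ≤ n - 1 ∧ g = s (m : ℤ)} := hu'
    have hG := rtgJ hn hrel
    obtain ⟨hxW, hxinc⟩ := min_rep_J hn hy hu2 hyx (fun v hv => hmin v hv)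
    obtain ⟨hx'W, hx'inc⟩ := min_rep_J hn hw hu'2 hwx' (fun v hv => hmin' v hv)
    set vv := u * (y⁻¹ * w) * u'⁻¹ with hvvdef
    have hvveq : x * vv = x' := by
      rw [hvvdef, hyx, hwx']
      group
    have hvvmem : vv ∈ Subgroup.closure {g | ∃ m : ℕ, 1 ≤ m ∧ m ≤ n - 1 ∧ g = s (m : ℤ)} :=
      mul_mem (mul_mem hu2 hG) (inv_mem hu'2)
    obtain ⟨hvvW, hvvpos⟩ := WJ_le_pos hn1 hvvmem
    have hvvup : ∀ i : ℤ, 1 ≤ i → i ≤ (n : ℤ) → vv i ≤ (n : ℤ) := by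
      intro i h1 h2
      have hp := hvvpos i h1 h2
      have := (W_abs hvvW (i := i) (by omega) (by rw [abs_of_pos (by omega)]; omega)).2
      rcases abs_cases (vv i) with ⟨h, _⟩ | ⟨h, _⟩ <;> omega
    have hx'app : ∀ k : ℤ, x' k = x (vv k) := by
      intro k
      rw [← hvveq, Equiv.Perm.mul_apply]
    have hvvmono : ∀ i : ℤ, 1 ≤ i → i ≤ (n : ℤ) - 1 → vv i < vv (i + 1) := by
      intro i h1 h2
      have e1 : x (vv i) < x (vv (i + 1)) := by
        rw [← hx'app, ← hx'app]
        exact hx'inc i h1 h2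
      by_contra hle
      push_neg at hle
      rcases eq_or_lt_of_le hle with heq | hlt
      · have := vv.injective heq
        omega
      · have := strictMonoOn_of_adj hxinc (vv (i + 1)) (vv i)
          (hvvpos (i + 1) (by omega) (by omega)) (hvvup i h1 (by omega)) hlt
        omega
    have hfix := mono_id (by omega : 1 ≤ (n : ℤ)) hvvpos hvvup hvvmono
    have hvv1 : vv = 1 := eq_one_of_fix hvvW hfix
    rw [← hvveq, hvv1, mul_one]
  · -- Part (ii): relations of types I_{n-1}, II_{n-1}, III_{n-1}
    intro hrel x u x' u' hu hyx hleny hmin hu' hwx' hlenw hmin'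
    have hu2 : u ∈ Subgroup.closure
        (insert t {g | ∃ m : ℕ, 1 ≤ m ∧ m ≤ n - 2 ∧ g = s (m : ℤ)}) := hu
    have hu'2 : u' ∈ Subgroup.closure
        (insert t {g | ∃ m : ℕ, 1 ≤ m ∧ m ≤ n - 2 ∧ g = s (m : ℤ)}) := hu'
    have hG := rtgK hn hrel
    obtain ⟨hxW, hxinc, hxpos1⟩ := min_rep_K hn hy hu2 hyx (fun v hv => hmin v hv)
    obtain ⟨hx'W, hx'inc, hx'pos1⟩ := min_rep_K hn hw hu'2 hwx' (fun v hv => hmin' v hv)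
    -- positivity on [1, n-1]
    have hxpos : ∀ i : ℤ, 1 ≤ i → i ≤ (n : ℤ) - 1 → 0 < x i := by
      intro i h1 h2
      rcases eq_or_lt_of_le h1 with heq | hgt
      · rw [← heq]; exact hxpos1
      · have := strictMonoOn_of_adj (N := (n : ℤ) - 1)
          (fun j hj1 hj2 => hxinc j hj1 (by omega)) 1 i le_rfl (by omega) (by omega)
        omega
    have hx'pos : ∀ i : ℤ, 1 ≤ i → i ≤ (n : ℤ) - 1 → 0 < x' i := by
      intro i h1 h2
      rcases eq_or_lt_of_le h1 with heq | hgt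
      · rw [← heq]; exact hx'pos1
      · have := strictMonoOn_of_adj (N := (n : ℤ) - 1)
          (fun j hj1 hj2 => hx'inc j hj1 (by omega)) 1 i le_rfl (by omega) (by omega)
        omega
    set vv := u * (y⁻¹ * w) * u'⁻¹ with hvvdef
    have hvveq : x * vv = x' := by
      rw [hvvdef, hyx, hwx']
      group
    have hvvmem : vv ∈ Subgroup.closure
        (insert t {g | ∃ m : ℕ, 1 ≤ m ∧ m ≤ n - 2 ∧ g = s (m : ℤ)}) :=
      mul_mem (mul_mem hu2 hG) (inv_mem hu'2)
    obtain ⟨hvvW, hvvn⟩ := WK_le_fix hn hvvmem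
    have hx'app : ∀ k : ℤ, x' k = x (vv k) := by
      intro k
      rw [← hvveq, Equiv.Perm.mul_apply]
    -- vv maps [1, n-1] into itself
    have hvvrange : ∀ i : ℤ, 1 ≤ i → i ≤ (n : ℤ) - 1 → 1 ≤ vv i ∧ vv i ≤ (n : ℤ) - 1 := by
      intro i h1 h2
      have hne0 : vv i ≠ 0 ∧ |vv i| ≤ (n : ℤ) :=
        W_abs hvvW (i := i) (by omega) (by rw [abs_of_pos (by omega)]; omega)
      have hnen : vv i ≠ (n : ℤ) := by
        intro h
        have : i = (n : ℤ) := vv.injective (h.trans hvvn.symm)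
        omega
      have hnenn : vv i ≠ -(n : ℤ) := by
        intro h
        have hmn : vv (-(n : ℤ)) = -(n : ℤ) := by rw [hvvW.1, hvvn]
        have : i = -(n : ℤ) := vv.injective (h.trans hmn.symm)
        omega
      have habs : |vv i| ≤ (n : ℤ) := hne0.2
      rcases abs_cases (vv i) with ⟨h, h'⟩ | ⟨h, h'⟩
      · refine ⟨by omega, by omega⟩
      · -- vv i < 0 : contradiction with positivity
        exfalso
        have hj1 : 1 ≤ -(vv i) ∧ -(vv i) ≤ (n : ℤ) - 1 := by
          constructor
          · omega
          · omega
        have hxj : 0 < x (-(vv i)) := hxpos _ hj1.1 hj1.2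
        have hodd : x (vv i) = -(x (-(vv i))) := by
          have := hxW.1 (-(vv i))
          rw [neg_neg] at this
          omega
        have hx'i := hx'pos i h1 h2
        rw [hx'app i] at hx'i
        omega
    have hvvmono : ∀ i : ℤ, 1 ≤ i → i ≤ (n : ℤ) - 1 - 1 → vv i < vv (i + 1) := by
      intro i h1 h2
      have e1 : x (vv i) < x (vv (i + 1)) := by
        rw [← hx'app, ← hx'app]
        exact hx'inc i h1 (by omega)
      by_contra hle
      push_neg at hle
      rcases eq_or_lt_of_le hle with heq | hlt
      · have := vv.injective heq
        omega
      · have := strictMonoOn_of_adj (N := (n : ℤ) - 1)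
          (fun j hj1 hj2 => hxinc j hj1 (by omega)) (vv (i + 1)) (vv i)
          (hvvrange (i + 1) (by omega) (by omega)).1 (hvvrange i h1 (by omega)).2 hlt
        omega
    have hfix := mono_id (by omega : 1 ≤ (n : ℤ) - 1)
      (fun i h1 h2 => (hvvrange i h1 h2).1)
      (fun i h1 h2 => (hvvrange i h1 h2).2) hvvmono
    have hfix' : ∀ i : ℤ, 1 ≤ i → i ≤ (n : ℤ) → vv i = i := by
      intro i h1 h2
      rcases eq_or_lt_of_le h2 with heq | hlt
      · rw [heq]; exact hvvn
      · exact hfix i h1 (by omega)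
    have hvv1 : vv = 1 := eq_one_of_fix hvvW hfix'
    rw [← hvveq, hvv1, mul_one]

end BnPaper
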